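/- Let D be a dominion of player α in a parity game with winning strategy σ. Then for every priority p in the set { max{pr(v) : v ∈ inf(π)} : π ∈ Plays(D, σ) } of winning priorities, there is a p-tangle (U, σ restricted to U) with U ⊆ D. -/

import Mathlib

open scoped Classical

/-- A parity game on a finite vertex type `V`.  Player `false` is Even and
player `true` is Odd; `owner v` is the player controlling vertex `v`,
`edge` is the (left-total) move relation and `pr` assigns priorities. -/
structure ParityGame (V : Type) [Fintype V] where
  owner : V → Bool
  edge : V → V → Prop
  total : ∀ v, ∃ w, edge v w
  pr : V → ℕ

namespace ParityGame

variable {V : Type} [Fintype V] (G : ParityGame V)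

/-- The player whose parity matches the priority `p` (`false` = Even, `true` = Odd). -/
def playerOf (p : ℕ) : Bool := decide (p % 2 = 1)

/-- A play is an infinite sequence of vertices consistent with the edge relation. -/
def IsPlay (π : ℕ → V) : Prop := ∀ i, G.edge (π i) (π (i + 1))

/-- The set of vertices occurring infinitely often in `π`. -/
def infOcc (π : ℕ → V) : Set V := {v | ∀ n : ℕ, ∃ m, n ≤ m ∧ π m = v}

/-- The highest priority of a vertex in `S`. -/
noncomputable def maxPr (S : Set V) : ℕ := sSup (G.pr '' S)

/-- Player `α` wins the play `π` iff the highest priority occurring infinitely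
often in `π` has `α`'s parity. -/
def Wins (α : Bool) (π : ℕ → V) : Prop := playerOf (G.maxPr (infOcc π)) = α

/-- A (positional, partial) strategy for player `α`. -/
def IsStrategy (α : Bool) (σ : V → Option V) : Prop :=
  ∀ v w, σ v = some w → G.owner v = α ∧ G.edge v w

/-- A play is consistent with the strategy `σ`. -/
def Consistent (σ : V → Option V) (π : ℕ → V) : Prop :=
  ∀ i w, σ (π i) = some w → π (i + 1) = w

/-- All plays starting in `U` that are consistent with `σ`. -/
def PlaysFrom (U : Set V) (σ : V → Option V) : Set (ℕ → V) :=
  {π | G.IsPlay π ∧ π 0 ∈ U ∧ Consistent σ π}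

/-- `U` is closed with respect to player `α`: every `α`-vertex of `U` has a
successor in `U` and every opponent vertex of `U` has all successors in `U`. -/
def ClosedFor (α : Bool) (U : Set V) : Prop :=
  (∀ v ∈ U, G.owner v = α → ∃ w ∈ U, G.edge v w) ∧
  (∀ v ∈ U, G.owner v ≠ α → ∀ w, G.edge v w → w ∈ U)

/-- `D` is an `α`-dominion with (winning) strategy `σ`: `D` is closed for `α`,
`σ` is a strategy of `α` defined on all `α`-vertices of `D` with values in `D`,
and `α` wins every consistent play from `D`. -/
def IsDominionWith (α : Bool) (D : Set V) (σ : V → Option V) : Prop :=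
  G.ClosedFor α D ∧ G.IsStrategy α σ ∧
  (∀ v ∈ D, G.owner v = α → ∃ w ∈ D, σ v = some w) ∧
  ∀ π ∈ G.PlaysFrom D σ, G.Wins α π

/-- `D` is an `α`-dominion. -/
def IsDominion (α : Bool) (D : Set V) : Prop := ∃ σ, G.IsDominionWith α D σ

/-- The value of a play: the highest priority occurring infinitely often. -/
noncomputable def playValue (π : ℕ → V) : ℕ := G.maxPr (infOcc π)

/-- `D` is a `p`-dominion with winning strategy `σ`: a dominion such that `p` is
the maximum, over all consistent plays from `D`, of the highest priority seen
infinitely often. -/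
def IsPDominionWith (α : Bool) (p : ℕ) (D : Set V) (σ : V → Option V) : Prop :=
  G.IsDominionWith α D σ ∧ IsGreatest (G.playValue '' G.PlaysFrom D σ) p

/-- `D` is a `p`-dominion for player `α`. -/
def IsPDominion (α : Bool) (p : ℕ) (D : Set V) : Prop := ∃ σ, G.IsPDominionWith α p D σ

/-- The edges of the subgame `G[U,σ]` induced by `U` and the strategy `σ`. -/
def subEdge (U : Set V) (σ : V → Option V) (u v : V) : Prop :=
  u ∈ U ∧ v ∈ U ∧ G.edge u v ∧ (σ u = none ∨ σ u = some v)

/-- `G[U,σ]` is strongly connected. -/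
def StronglyConnected (U : Set V) (σ : V → Option V) : Prop :=
  ∀ u ∈ U, ∀ v ∈ U, Relation.ReflTransGen (G.subEdge U σ) u v

/-- A cycle of `G[U,σ]`: from `v` through the list `l` back to `v`. -/
def IsCycle (U : Set V) (σ : V → Option V) (v : V) (l : List V) : Prop :=
  List.Chain (G.subEdge U σ) v (l ++ [v])

/-- Player `α` wins all cycles of `G[U,σ]`: the maximum priority on every cycle
has `α`'s parity. -/
def WinsAllCycles (α : Bool) (U : Set V) (σ : V → Option V) : Prop :=
  ∀ v l, G.IsCycle U σ v l → playerOf (G.maxPr {x | x ∈ v :: l}) = α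

/-- `(U, σ)` is a tangle: `U` is nonempty, `σ` is a strategy for the player `α`
of the parity of the highest priority of `U`, defined exactly on the
`α`-vertices of `U` with values in `U`, the subgame `G[U,σ]` is strongly
connected, and player `α` wins all cycles of `G[U,σ]`. -/
def IsTangle (U : Set V) (σ : V → Option V) : Prop :=
  U.Nonempty ∧
  (∀ v w, σ v = some w → v ∈ U ∧ w ∈ U ∧ G.owner v = playerOf (G.maxPr U) ∧ G.edge v w) ∧
  (∀ v ∈ U, G.owner v = playerOf (G.maxPr U) → (σ v).isSome) ∧
  G.StronglyConnected U σ ∧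
  G.WinsAllCycles (playerOf (G.maxPr U)) U σ

/-- The escapes `E_T(T)` of a tangle with vertex set `U`: the successors outside
`U` of the opponent's vertices in `U`. -/
def escapes (U : Set V) : Set V :=
  {v | v ∉ U ∧ ∃ u ∈ U, G.owner u ≠ playerOf (G.maxPr U) ∧ G.edge u v}

/-- The restriction of a strategy to a set `U`. -/
noncomputable def restrict (σ : V → Option V) (U : Set V) : V → Option V :=
  fun v => if v ∈ U then σ v else none

/-- The attractor of `A` for player `α`: the least fixpoint of
`Z := A ∪ {v ∈ V_α | E(v) ∩ Z ≠ ∅} ∪ {v ∈ V_ᾱ | E(v) ⊆ Z}`. -/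
inductive Attr (α : Bool) (A : Set V) : V → Prop
  | base : ∀ v, v ∈ A → Attr α A v
  | step : ∀ v w, G.owner v = α → G.edge v w → Attr α A w → Attr α A v
  | forced : ∀ v, G.owner v ≠ α → (∀ w, G.edge v w → Attr α A w) → Attr α A v

/-- The attractor of `A` for player `α`, as a set. -/
def attrSet (α : Bool) (A : Set V) : Set V := {v | G.Attr α A v}

/-- The tangle attractor of `A` for player `α` with tangle set `TT`: the least
fixpoint additionally attracting all vertices of `α`-tangles of `TT` whose
escapes all lie in the attracting set. -/
inductive TAttr (α : Bool) (TT : Set (Set V × (V → Option V))) (A : Set V) : V → Prop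
  | base : ∀ v, v ∈ A → TAttr α TT A v
  | step : ∀ v w, G.owner v = α → G.edge v w → TAttr α TT A w → TAttr α TT A v
  | forced : ∀ v, G.owner v ≠ α → (∀ w, G.edge v w → TAttr α TT A w) → TAttr α TT A v
  | tangle : ∀ (U : Set V) (τ : V → Option V) (v : V), (U, τ) ∈ TT →
      G.IsTangle U τ → playerOf (G.maxPr U) = α →
      (∀ w ∈ G.escapes U, TAttr α TT A w) → v ∈ U → TAttr α TT A v

/-- The tangle attractor of `A` for player `α`, as a set. -/
def tattrSet (α : Bool) (TT : Set (Set V × (V → Option V))) (A : Set V) : Set V :=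
  {v | G.TAttr α TT A v}

end ParityGame

namespace ParityGame

variable {V : Type} [Fintype V]

/-- In a finite graph, some vertex occurs infinitely often in any infinite play. -/
lemma infOcc_nonempty' (π : ℕ → V) : (infOcc π).Nonempty := by
  obtain ⟨v, hv⟩ := Finite.exists_infinite_fiber π
  rw [Set.infinite_coe_iff] at hv
  refine ⟨v, fun n => ?_⟩
  obtain ⟨m, hm, hlt⟩ := hv.exists_gt n
  exact ⟨m, le_of_lt hlt, hm⟩

/-- Eventually the play only visits vertices occurring infinitely often. -/
lemma eventually_mem_infOcc (π : ℕ → V) :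
    ∃ N, ∀ m, N ≤ m → π m ∈ infOcc π := by
  have h : ∀ v : V, ∃ N : ℕ, v ∉ infOcc π → ∀ m, N ≤ m → π m ≠ v := by
    intro v
    by_cases hv : v ∈ infOcc π
    · exact ⟨0, fun hc => absurd hv hc⟩
    · simp only [infOcc, Set.mem_setOf_eq, not_forall] at hv
      obtain ⟨n, hn⟩ := hv
      push_neg at hn
      exact ⟨n, fun _ m hm => hn m hm⟩
  choose N hN using h
  refine ⟨Finset.univ.sup N, fun m hm => ?_⟩
  by_contra hc
  exact hN (π m) hc m (le_trans (Finset.le_sup (Finset.mem_univ _)) hm) rfl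

/-- Successor in the periodic index: `(i+1) % n` in terms of `i % n`. -/
lemma mod_succ_cases (i n : ℕ) (hn : 0 < n) :
    (i % n + 1 < n ∧ (i + 1) % n = i % n + 1) ∨
    (i % n + 1 = n ∧ (i + 1) % n = 0) := by
  rcases lt_or_ge (i % n + 1) n with hlt | hge
  · left
    refine ⟨hlt, ?_⟩
    have hdm : n * (i / n) + i % n = i := Nat.div_add_mod i n
    have : i + 1 = n * (i / n) + (i % n + 1) := by omega
    rw [this, Nat.mul_add_mod, Nat.mod_eq_of_lt hlt]
  · right
    have hmod : i % n < n := Nat.mod_lt i hn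
    have heq : i % n + 1 = n := by omega
    refine ⟨heq, ?_⟩
    have hdm : n * (i / n) + i % n = i := Nat.div_add_mod i n
    have hms : n * (i / n + 1) = n * (i / n) + n := by ring
    have : i + 1 = n * (i / n + 1) := by omega
    rw [this, Nat.mul_mod_right]

/-- From a cycle of `G[U, σ|U]` inside a dominion `D` one can build a
consistent infinite play whose infinitely-occurring vertices are exactly the
vertices of the cycle. -/
lemma cycle_play (G : ParityGame V) (D : Set V) (σ : V → Option V)
    (U : Set V) (hUD : U ⊆ D) (v : V) (l : List V)
    (hcyc : G.IsCycle U (restrict σ U) v l) :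
    ∃ π' : ℕ → V, π' ∈ G.PlaysFrom D σ ∧ infOcc π' = {x | x ∈ v :: l} := by
  classical
  set c : List V := v :: l with hc
  have hn : 0 < c.length := by simp [hc]
  set n : ℕ := c.length with hnn
  -- the chain on (v :: l) ++ [v]
  have hchain : List.Chain' (G.subEdge U (restrict σ U)) (c ++ [v]) := by
    have : (c ++ [v]) = v :: (l ++ [v]) := by simp [hc]
    rw [this]
    exact hcyc
  rw [List.Chain', List.isChain_iff_getElem] at hchain
  have hlen : (c ++ [v]).length = n + 1 := by simp [hnn]
  have hget : ∀ (a b : ℕ) (ha : a < c.length) (hb : b < c.length), a = b →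
      getElem c a ha = getElem c b hb := by
    rintro a b ha hb rfl; rfl
  -- the indexed step relation along the cycle
  have hstep' : ∀ j (hj : j < n),
      G.subEdge U (restrict σ U) (getElem c j hj)
        (getElem (c ++ [v]) (j + 1) (by omega)) := by
    intro j hj
    have := hchain j (by simpa [hlen] using hj)
    simpa [List.get_eq_getElem, List.getElem_append_left (by omega : j < c.length)] using this
  -- the periodic play
  set π' : ℕ → V := fun i => getElem c (i % n) (Nat.mod_lt i hn) with hπ'
  have hπval : ∀ i, π' i = getElem c (i % n) (Nat.mod_lt i hn) := fun i => rfl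
  have hstep : ∀ i, G.subEdge U (restrict σ U) (π' i) (π' (i + 1)) := by
    intro i
    have this0 := hstep' (i % n) (Nat.mod_lt i hn)
    rcases mod_succ_cases i n hn with ⟨hlt, heq⟩ | ⟨heqn, heq⟩
    · have hgl : getElem (c ++ [v]) (i % n + 1) (by omega) = getElem c (i % n + 1) hlt :=
        List.getElem_append_left hlt
      have hπi1 : π' (i + 1) = getElem c (i % n + 1) hlt := by
        rw [hπval]; exact hget _ _ _ _ heq
      rw [hπval i, hπi1]
      exact hgl ▸ this0
    · have hgl : getElem (c ++ [v]) (i % n + 1) (by omega) = v :=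
        List.getElem_concat_length heqn _
      have hπi1 : π' (i + 1) = v := by
        rw [hπval]
        have : getElem c ((i + 1) % n) (Nat.mod_lt (i+1) hn) = getElem c 0 hn :=
          hget _ _ _ _ heq
        rw [this]; simp [hc]
      rw [hπval i, hπi1]
      exact hgl ▸ this0
  have hmemU : ∀ i, π' i ∈ U := fun i => (hstep i).1
  refine ⟨π', ⟨fun i => (hstep i).2.2.1, ?_, ?_⟩, ?_⟩
  · exact hUD (hmemU 0)
  · -- consistency
    intro i w hw
    rcases (hstep i).2.2.2 with hnone | hsome
    · rw [restrict, if_pos (hmemU i), hw] at hnone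
      exact absurd hnone (by simp)
    · rw [restrict, if_pos (hmemU i), hw] at hsome
      exact (Option.some_inj.mp hsome).symm
  · -- infOcc π' = cycle vertices
    ext x
    constructor
    · rintro hx
      obtain ⟨m, _, hm⟩ := hx 0
      rw [← hm]
      exact List.getElem_mem _
    · intro hx
      obtain ⟨j, hj, hjx⟩ := List.mem_iff_getElem.mp hx
      intro n₀
      refine ⟨j + n * n₀, ?_, ?_⟩
      · have : n₀ ≤ n * n₀ := Nat.le_mul_of_pos_left n₀ hn
        omega
      · have hmod : (j + n * n₀) % n = j := by
          rw [Nat.add_mul_mod_self_left, Nat.mod_eq_of_lt hj]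
        rw [hπval, ← hjx]
        exact hget _ _ _ _ hmod

/-- for every winning priority `p` of a dominion `D` with winning
strategy `σ`, there is a `p`-tangle `(U, σ|U)` with `U ⊆ D`. -/
theorem dominion_tangle_hierarchy (G : ParityGame V) (α : Bool) (D : Set V)
    (σ : V → Option V) (h : G.IsDominionWith α D σ)
    (p : ℕ) (hp : p ∈ G.playValue '' G.PlaysFrom D σ) :
    ∃ U : Set V, U ⊆ D ∧ G.IsTangle U (restrict σ U) ∧ G.maxPr U = p := by
  classical
  obtain ⟨π, hπ, hval⟩ := hp
  obtain ⟨hplay, hstart, hcons⟩ := hπ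
  obtain ⟨hclosed, hstrat, hdef, hwin⟩ := h
  set U : Set V := infOcc π with hU
  -- the play stays in D
  have hinD : ∀ i, π i ∈ D := by
    intro i
    induction i with
    | zero => exact hstart
    | succ i ih =>
      by_cases ho : G.owner (π i) = α
      · obtain ⟨w, hwD, hw⟩ := hdef (π i) ih ho
        rw [hcons i w hw]; exact hwD
      · exact hclosed.2 (π i) ih ho _ (hplay i)
  -- U ⊆ D
  have hUD : U ⊆ D := by
    rintro x hx
    obtain ⟨m, _, hm⟩ := hx 0
    rw [← hm]; exact hinD m
  -- α is the player of the top priority of U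
  have hα : playerOf (G.maxPr U) = α := hwin π ⟨hplay, hstart, hcons⟩
  -- the value of the play is p
  have hmaxp : G.maxPr U = p := hval
  -- membership in U is preserved by σ
  have hσU : ∀ x ∈ U, ∀ w, σ x = some w → w ∈ U := by
    intro x hx w hw n
    obtain ⟨m, hmn, hm⟩ := hx n
    refine ⟨m + 1, by omega, ?_⟩
    exact hcons m w (by rw [hm]; exact hw)
  refine ⟨U, hUD, ⟨infOcc_nonempty' π, ?_, ?_, ?_, ?_⟩, hmaxp⟩
  · -- strategy is on α-vertices of U with values in U
    intro x w hxw
    have hxU : x ∈ U := by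
      by_contra hc
      rw [restrict, if_neg hc] at hxw; exact absurd hxw (by simp)
    rw [restrict, if_pos hxU] at hxw
    obtain ⟨ho, he⟩ := hstrat x w hxw
    exact ⟨hxU, hσU x hxU w hxw, by rw [hα]; exact ho, he⟩
  · -- strategy is defined on all α-vertices of U
    intro x hxU ho
    obtain ⟨w, _, hw⟩ := hdef x (hUD hxU) (by rw [← hα]; exact ho)
    rw [restrict, if_pos hxU, hw]; simp
  · -- strong connectivity
    obtain ⟨N, hN⟩ := eventually_mem_infOcc π
    -- single steps along the tail of the play
    have hstep : ∀ i, N ≤ i → G.subEdge U (restrict σ U) (π i) (π (i + 1)) := by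
      intro i hi
      refine ⟨hN i hi, hN (i + 1) (by omega), hplay i, ?_⟩
      rcases hσ : σ (π i) with _ | w
      · left; rw [restrict, if_pos (hN i hi), hσ]
      · right; rw [restrict, if_pos (hN i hi), hσ, hcons i w hσ]
    have hpath : ∀ m k, N ≤ m →
        Relation.ReflTransGen (G.subEdge U (restrict σ U)) (π m) (π (m + k)) := by
      intro m k hm
      induction k with
      | zero => exact Relation.ReflTransGen.refl
      | succ k ih => exact ih.tail (hstep (m + k) (by omega))
    intro u hu x hx
    obtain ⟨m, hmN, hmu⟩ := hu N
    obtain ⟨m', hmm', hmx⟩ := hx m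
    have := hpath m (m' - m) hmN
    rw [hmu] at this
    rw [← hmx]
    have h2 : m + (m' - m) = m' := by omega
    rw [h2] at this
    exact this
  · -- α wins all cycles
    intro x l hcyc
    obtain ⟨π', hπ'mem, hπ'inf⟩ := cycle_play G D σ U hUD x l hcyc
    have hwins : playerOf (G.maxPr (infOcc π')) = α := hwin π' hπ'mem
    rw [hπ'inf] at hwins
    rw [hα]
    exact hwins

end ParityGame
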